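/- Let G be a graph, X_C ⊆ V(G), and H an X_C-certificate of order z in G. Then H contains a subgraph Ĥ that is also an X_C-certificate of order z in G such that Ĥ − X_C has at most z²·|X_C| connected components. -/

import Mathlib

open SimpleGraph

namespace CertHelp

variable {V : Type*}

/-- The simple graph on `V` with the edges of the subgraph `H` having both endpoints
in `A` and avoiding `B`. -/
def pgraph {G : SimpleGraph V} (H : G.Subgraph) (A B : Set V) : SimpleGraph V where
  Adj u v := H.Adj u v ∧ u ∈ A ∧ v ∈ A ∧ u ∉ B ∧ v ∉ B
  symm := ⟨fun u v h => ⟨h.1.symm, h.2.2.1, h.2.1, h.2.2.2.2, h.2.2.2.1⟩⟩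
  loopless := ⟨fun u h => G.loopless.irrefl u (H.adj_sub h.1)⟩

lemma parity_of_walk {Γ : SimpleGraph V} {f : V → Bool}
    (hf : ∀ u v, Γ.Adj u v → f u ≠ f v) :
    ∀ {u v : V} (p : Γ.Walk u v), (f u = f v ↔ Even p.length) := by
  intro u v p
  induction p with
  | nil => simp
  | @cons a b w h q ih =>
    have hab := hf _ _ h
    rw [Walk.length_cons, Nat.even_add_one, ← ih]
    cases hfa : f a <;> cases hfb : f b <;> cases hfw : f w <;> simp_all

lemma closed_even {Γ : SimpleGraph V} {f : V → Bool}
    (hf : ∀ u v, Γ.Adj u v → f u ≠ f v) {u : V} (p : Γ.Walk u u) : Even p.length :=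
  (parity_of_walk hf p).1 rfl

lemma exists_proper {Γ : SimpleGraph V}
    (h : ∀ (u : V) (p : Γ.Walk u u), Even p.length) :
    ∃ f : V → Bool, ∀ u v, Γ.Adj u v → f u ≠ f v := by
  classical
  have hrep : ∀ C : Γ.ConnectedComponent, ∃ v, Γ.connectedComponentMk v = C :=
    fun C => C.exists_rep
  choose rep hrep using hrep
  have hreach : ∀ v, Γ.Reachable (rep (Γ.connectedComponentMk v)) v :=
    fun v => ConnectedComponent.exact (hrep _)
  have w : ∀ v, Γ.Walk (rep (Γ.connectedComponentMk v)) v := fun v => (hreach v).some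
  refine ⟨fun v => decide (Odd ((w v).length)), ?_⟩
  intro u v hadj
  have hC : Γ.connectedComponentMk u = Γ.connectedComponentMk v :=
    ConnectedComponent.sound hadj.reachable
  have hrw : rep (Γ.connectedComponentMk u) = rep (Γ.connectedComponentMk v) :=
    congrArg rep hC
  have heven := h _ ((w v).append (Walk.cons hadj.symm ((w u).copy hrw rfl).reverse))
  rw [Walk.length_append, Walk.length_cons, Walk.length_reverse, Walk.length_copy] at heven
  simp only [ne_eq, decide_eq_decide]
  rw [Nat.even_add] at heven
  simp [Nat.even_add_one, Nat.odd_iff, Nat.even_iff] at heven ⊢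
  omega

lemma support_all {Γ : SimpleGraph V} (P : V → Prop)
    (hP : ∀ a b, Γ.Adj a b → P a → P b) :
    ∀ {u v : V} (p : Γ.Walk u v), P u → ∀ x ∈ p.support, P x := by
  intro u v p
  induction p with
  | nil => intro hu x hx; rw [Walk.support_nil, List.mem_singleton] at hx; rwa [hx]
  | @cons a b w h q ih =>
    intro ha x hx
    rw [Walk.support_cons, List.mem_cons] at hx
    rcases hx with rfl | hx
    · exact ha
    · exact ih (hP _ _ h ha) x hx

lemma walk_transfer {Γ Γ' : SimpleGraph V} {u v : V} (p : Γ.Walk u v)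
    (h : ∀ a b, Γ.Adj a b → a ∈ p.support → b ∈ p.support → Γ'.Adj a b) :
    ∃ p' : Γ'.Walk u v, p'.length = p.length := by
  refine ⟨p.transfer Γ' ?_, Walk.length_transfer _ _⟩
  intro e he
  revert he
  refine Sym2.ind (fun a b he => ?_) e
  exact (Γ'.mem_edgeSet).mpr
    (h a b (p.adj_of_mem_edges he) (p.fst_mem_support_of_mem_edges he)
      (p.snd_mem_support_of_mem_edges he))

lemma reachable_in {Γ : SimpleGraph V} {T : Set V} {Γ' : SimpleGraph T}
    (hadj : ∀ a b (ha : a ∈ T) (hb : b ∈ T), Γ.Adj a b → Γ'.Adj ⟨a, ha⟩ ⟨b, hb⟩) :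
    ∀ {a b : V} (p : Γ.Walk a b) (hsup : ∀ x ∈ p.support, x ∈ T),
      Γ'.Reachable ⟨a, hsup a p.start_mem_support⟩ ⟨b, hsup b p.end_mem_support⟩ := by
  intro a b p
  induction p with
  | nil => intro _; rfl
  | @cons a c b h q ih =>
    intro hsup
    have ha : a ∈ T := hsup a (Walk.start_mem_support _)
    have hc : c ∈ T := hsup c (by rw [Walk.support_cons]; exact List.mem_cons_of_mem _ q.start_mem_support)
    have hq : ∀ x ∈ q.support, x ∈ T := fun x hx =>
      hsup x (by rw [Walk.support_cons]; exact List.mem_cons_of_mem _ hx)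
    exact ((hadj a c ha hc h).reachable).trans (ih hq)

lemma colorable_two_of_bool {α : Type*} {Γ : SimpleGraph α} (f : α → Bool)
    (hf : ∀ {u v}, Γ.Adj u v → f u ≠ f v) : Γ.Colorable 2 := by
  have := (SimpleGraph.Coloring.mk f hf).colorable
  simpa using this

lemma mod_two_eq_of_even_iff {a b : ℕ} (h : Even a ↔ Even b) : a % 2 = b % 2 := by
  simp [Nat.even_iff] at h; omega

lemma bool_xor_false {a b : Bool} : xor a b = false ↔ a = b := by
  cases a <;> cases b <;> simp

end CertHelp
open SimpleGraph CertHelp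

/-- `S` is an odd cycle transversal of `G`: removing `S` leaves a bipartite graph. -/
def IsOCT {W : Type*} (G : SimpleGraph W) (S : Set W) : Prop :=
  (G.induce Sᶜ).Colorable 2

/-- `H` is an `XC`-certificate of order `z` in `G`: a subgraph of `G` such that `XC` is a
minimum-size odd cycle transversal of `H` and every connected component of `H` contains
at most `z` vertices of `XC`. -/
def IsCert {V : Type*} (G : SimpleGraph V) (H : G.Subgraph) (XC : Set V) (z : ℕ) : Prop :=
  XC ⊆ H.verts ∧
  IsOCT H.coe {x : ↥H.verts | (x : V) ∈ XC} ∧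
  (∀ S : Set ↥H.verts, IsOCT H.coe S → XC.ncard ≤ S.ncard) ∧
  ∀ v : ↥H.verts, {u : ↥H.verts | H.coe.Reachable u v ∧ (u : V) ∈ XC}.ncard ≤ z

set_option maxHeartbeats 3000000 in
/-- Every `XC`-certificate `H` of order `z` contains an `XC`-certificate `Ĥ` of order `z`
such that `Ĥ − XC` has at most `z² · |XC|` connected components. -/
theorem certificate_few_components {V : Type} [Fintype V] (G : SimpleGraph V)
    (H : G.Subgraph) (XC : Set V) (z : ℕ) (hH : IsCert G H XC z) :
    ∃ H' : G.Subgraph, H' ≤ H ∧ IsCert G H' XC z ∧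
      Nat.card ((H'.deleteVerts XC).coe.ConnectedComponent) ≤ z ^ 2 * XC.ncard := by
  classical
  obtain ⟨hXW, hOCT, hmin, hord⟩ := hH
  obtain ⟨C0⟩ := hOCT
  let eV := Fintype.equivFin V
  have hfin2 : ∀ a b : Fin 2, a ≠ b → decide (a = 1) ≠ decide (b = 1) := by decide
  let c : V → Bool := fun v =>
    if h : v ∈ H.verts ∧ v ∉ XC then decide (C0 ⟨⟨v, h.1⟩, h.2⟩ = 1) else false
  have hc : ∀ u v, H.Adj u v → u ∉ XC → v ∉ XC → c u ≠ c v := by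
    intro u v huv hu hv
    have hu' : u ∈ H.verts := H.edge_vert huv
    have hv' : v ∈ H.verts := H.edge_vert huv.symm
    have hval := C0.valid (show (H.coe.induce {x : ↥H.verts | (x : V) ∈ XC}ᶜ).Adj
      ⟨⟨u, hu'⟩, hu⟩ ⟨⟨v, hv'⟩, hv⟩ from huv)
    have e1 : c u = decide (C0 ⟨⟨u, hu'⟩, hu⟩ = 1) := dif_pos ⟨hu', hu⟩
    have e2 : c v = decide (C0 ⟨⟨v, hv'⟩, hv⟩ = 1) := dif_pos ⟨hv', hv⟩
    rw [e1, e2]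
    exact hfin2 _ _ hval
  let K := H.spanningCoe
  let BB : SimpleGraph V := pgraph H Set.univ XC
  have hBBmk : ∀ {u v}, H.Adj u v → u ∉ XC → v ∉ XC → BB.Adj u v :=
    fun h h1 h2 => ⟨h, trivial, trivial, h1, h2⟩
  have hcBB : ∀ u v, BB.Adj u v → c u ≠ c v := fun u v h => hc u v h.1 h.2.2.2.1 h.2.2.2.2
  have hKBB : ∀ {u v}, BB.Adj u v → K.Adj u v := fun h => h.1
  have hBBtoK : ∀ {u v}, BB.Reachable u v → K.Reachable u v :=
    fun h => h.map ⟨id, fun h' => hKBB h'⟩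
  have hcompK : ∀ {u v}, BB.connectedComponentMk u = BB.connectedComponentMk v →
      K.connectedComponentMk u = K.connectedComponentMk v :=
    fun h => ConnectedComponent.sound (hBBtoK (ConnectedComponent.exact h))
  -- reachability transfer between K and H.coe
  have hKcoe : ∀ (a b : V) (p : K.Walk a b) (ha : a ∈ H.verts),
      ∃ hb : b ∈ H.verts, H.coe.Reachable ⟨a, ha⟩ ⟨b, hb⟩ := by
    intro a b p
    induction p with
    | nil => intro ha; exact ⟨ha, Reachable.refl _⟩
    | @cons a d b h q ih =>
      intro ha
      have h' : H.Adj a d := h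
      have hd : d ∈ H.verts := H.edge_vert h'.symm
      obtain ⟨hb, hr⟩ := ih hd
      exact ⟨hb, (Adj.reachable (show H.coe.Adj ⟨a, ha⟩ ⟨d, hd⟩ from h')).trans hr⟩
  have hcoeK : ∀ (x y : ↥H.verts), H.coe.Reachable x y → K.Reachable ↑x ↑y :=
    fun x y h => h.map ⟨Subtype.val, fun hadj => hadj⟩
  -- the reachability sets
  let Rs : V → Set V := fun x => {w | w ∈ XC ∧ K.Reachable w x}
  have hRz : ∀ x, x ∈ XC → (Rs x).ncard ≤ z := by
    intro x hx
    have himg : Rs x = Subtype.val ''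
        {u : ↥H.verts | H.coe.Reachable u ⟨x, hXW hx⟩ ∧ (u : V) ∈ XC} := by
      ext w
      constructor
      · rintro ⟨hwX, hreach⟩
        obtain ⟨hb, hr⟩ := hKcoe w x hreach.some (hXW hwX)
        exact ⟨⟨w, hXW hwX⟩, ⟨hr, hwX⟩, rfl⟩
      · rintro ⟨u, ⟨hr, huX⟩, rfl⟩
        exact ⟨huX, hcoeK _ _ hr⟩
    rw [himg, Set.ncard_image_of_injective _ Subtype.val_injective]
    exact hord ⟨x, hXW hx⟩
  -- connection types ("classes")
  let Rl : V → V → Bool → BB.ConnectedComponent → Prop := fun x y p C =>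
    ∃ a b, H.Adj x a ∧ H.Adj y b ∧ a ∉ XC ∧ b ∉ XC ∧
      BB.connectedComponentMk a = C ∧ BB.connectedComponentMk b = C ∧ xor (c a) (c b) = p
  have hRl_symm : ∀ x y p C, Rl x y p C → Rl y x p C := by
    rintro x y p C ⟨a, b, h1, h2, h3, h4, h5, h6, h7⟩
    exact ⟨b, a, h2, h1, h4, h3, h6, h5, by rw [Bool.xor_comm]; exact h7⟩
  have hRl_reach : ∀ x y p C, Rl x y p C → K.Reachable x y := by
    rintro x y p C ⟨a, b, h1, h2, h3, h4, h5, h6, h7⟩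
    have hab : BB.Reachable a b := ConnectedComponent.exact (h5.trans h6.symm)
    exact ((Adj.reachable (show K.Adj x a from h1)).trans (hBBtoK hab)).trans
      (Adj.reachable (show K.Adj y b from h2)).symm
  haveI hfinBB : Finite BB.ConnectedComponent := Quot.finite _
  haveI hfinK : Finite K.ConnectedComponent := Quot.finite _
  let Cls : Set (V × V × Bool) := {t | t.1 ∈ XC ∧ t.2.1 ∈ XC ∧ eV t.1 ≤ eV t.2.1 ∧
      (t.1 = t.2.1 → t.2.2 = true) ∧ ∃ C, Rl t.1 t.2.1 t.2.2 C}
  let ClsF : Finset (V × V × Bool) := (Set.toFinite Cls).toFinset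
  have hClsF : ∀ t, t ∈ ClsF ↔ t ∈ Cls := fun t => Set.Finite.mem_toFinset _
  let realizers : V × V × Bool → Finset BB.ConnectedComponent := fun t =>
    (Set.toFinite {C | Rl t.1 t.2.1 t.2.2 C}).toFinset
  have hrealizers : ∀ t C, C ∈ realizers t ↔ Rl t.1 t.2.1 t.2.2 C :=
    fun t C => Set.Finite.mem_toFinset _
  have hch : ∀ t : V × V × Bool, ∃ u ⊆ realizers t,
      u.card = min ((Rs t.1).ncard) ((realizers t).card) :=
    fun t => Finset.exists_subset_card_eq (min_le_right _ _)
  choose chosen hchsub hchcard using hch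
  let chosenAll : Finset BB.ConnectedComponent := ClsF.biUnion chosen
  -- membership of components
  have hcomp_mem : ∀ C ∈ chosenAll, ∀ a, BB.connectedComponentMk a = C →
      a ∈ H.verts ∧ a ∉ XC := by
    intro C hC a ha
    rw [Finset.mem_biUnion] at hC
    obtain ⟨t, htF, htc⟩ := hC
    have hRlC : Rl t.1 t.2.1 t.2.2 C := (hrealizers t C).mp (hchsub t htc)
    obtain ⟨b, b2, h1, h2, h3, h4, h5, h6, h7⟩ := hRlC
    have hb : b ∈ H.verts ∧ b ∉ XC := ⟨H.edge_vert h1.symm, h3⟩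
    have hreach : BB.Reachable b a := ConnectedComponent.exact (h5.trans ha.symm)
    have := support_all (Γ := BB) (fun x => x ∈ H.verts ∧ x ∉ XC)
      (fun p q hpq _ => ⟨H.edge_vert hpq.1.symm, hpq.2.2.2.2⟩) hreach.some hb
    exact this a (Walk.end_mem_support _)
  let KV : Set V := XC ∪ {v | v ∈ H.verts ∧ v ∉ XC ∧ BB.connectedComponentMk v ∈ chosenAll}
  have hXCKV : XC ⊆ KV := Set.subset_union_left
  have hKVW : KV ⊆ H.verts := by
    rintro v (hv | hv)
    · exact hXW hv
    · exact hv.1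
  have hKVcomp : ∀ a, BB.connectedComponentMk a ∈ chosenAll → a ∈ KV := by
    intro a h
    obtain ⟨h1, h2⟩ := hcomp_mem _ h a rfl
    exact Or.inr ⟨h1, h2, h⟩
  have hle : H.induce KV ≤ H := ⟨hKVW, fun v w h => h.2.2⟩
  refine ⟨H.induce KV, hle, ⟨hXCKV, ?_, ?_, ?_⟩, ?_⟩
  · -- IsOCT
    refine colorable_two_of_bool (fun x => c ((x : ↥(H.induce KV).verts) : V)) ?_
    intro u v hadj
    have h1 : H.Adj ↑↑u ↑↑v := hadj.2.2
    exact hc _ _ h1 u.2 v.2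
  · -- minimality
    intro S hSoct
    by_contra hlt
    push_neg at hlt
    let St : Set V := Subtype.val '' S
    have hStKV : ∀ x ∈ St, x ∈ KV := by
      rintro x ⟨u, hu, rfl⟩
      exact u.2
    have hStW : St ⊆ H.verts := fun x hx => hKVW (hStKV x hx)
    have hStcard : St.ncard = S.ncard := Set.ncard_image_of_injective _ Subtype.val_injective
    haveI : Fintype K.ConnectedComponent := Fintype.ofFinite _
    obtain ⟨D0, hD0⟩ : ∃ D0 : K.ConnectedComponent,
        (St ∩ {v | K.connectedComponentMk v = D0}).ncard <
        (XC ∩ {v | K.connectedComponentMk v = D0}).ncard := by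
      by_contra hall
      push_neg at hall
      have hfA : ∀ (A : Set V) (D0 : K.ConnectedComponent),
          (A ∩ {v | K.connectedComponentMk v = D0}).ncard =
          ((Set.toFinite A).toFinset.filter (fun v => K.connectedComponentMk v = D0)).card := by
        intro A D0
        rw [← Set.ncard_coe_finset]
        congr 1
        ext v
        simp only [Finset.coe_filter, Set.Finite.mem_toFinset, Set.mem_inter_iff,
          Set.mem_setOf_eq]
      have hXsum := Finset.card_eq_sum_card_fiberwise (s := (Set.toFinite XC).toFinset)
        (t := (Finset.univ : Finset K.ConnectedComponent))
        (f := fun v => K.connectedComponentMk v) (fun x _ => Finset.mem_univ _)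
      have hSsum := Finset.card_eq_sum_card_fiberwise (s := (Set.toFinite St).toFinset)
        (t := (Finset.univ : Finset K.ConnectedComponent))
        (f := fun v => K.connectedComponentMk v) (fun x _ => Finset.mem_univ _)
      have hXC2 : XC.ncard = (Set.toFinite XC).toFinset.card := Set.ncard_eq_toFinset_card _ _
      have hSt2 : St.ncard = (Set.toFinite St).toFinset.card := Set.ncard_eq_toFinset_card _ _
      have hcontra : XC.ncard ≤ St.ncard := by
        rw [hXC2, hSt2, hXsum, hSsum]
        refine Finset.sum_le_sum ?_
        intro D0 _
        have h1 := hall D0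
        rw [hfA XC D0, hfA St D0] at h1
        exact h1
      omega
    set D : Set V := {v | K.connectedComponentMk v = D0} with hDdef
    let GD : SimpleGraph V := pgraph H D St
    let M' : SimpleGraph V := pgraph H KV St
    have hodd : ∃ (b0 : V) (p : GD.Walk b0 b0), ¬ Even p.length := by
      by_contra hno
      simp only [not_exists, Decidable.not_not] at hno
      obtain ⟨fD, hfD⟩ := exists_proper (Γ := GD) hno
      set Sstar : Set V := (St ∩ D) ∪ (XC \ D) with hSsDef
      have hSstarW : Sstar ⊆ H.verts := by
        rintro x (hx | hx)
        · exact hStW hx.1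
        · exact hXW hx.1
      have hsame : ∀ {u v : V}, H.Adj u v → (u ∈ D ↔ v ∈ D) := by
        intro u v huv
        have hmkeq : K.connectedComponentMk u = K.connectedComponentMk v :=
          ConnectedComponent.sound (Adj.reachable (show K.Adj u v from huv))
        constructor
        · intro h; exact (hmkeq.symm.trans h)
        · intro h; exact (hmkeq.trans h)
      have hproper : ∀ u v, H.Adj u v → u ∉ Sstar → v ∉ Sstar →
          (if u ∈ D then fD u else c u) ≠ (if v ∈ D then fD v else c v) := by
        intro u v huv hu hv
        by_cases huD : u ∈ D
        · have hvD : v ∈ D := (hsame huv).mp huD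
          rw [if_pos huD, if_pos hvD]
          refine hfD u v ⟨huv, huD, hvD, ?_, ?_⟩
          · intro hS; exact hu (Or.inl ⟨hS, huD⟩)
          · intro hS; exact hv (Or.inl ⟨hS, hvD⟩)
        · have hvD : v ∉ D := fun h => huD ((hsame huv).mpr h)
          rw [if_neg huD, if_neg hvD]
          refine hc u v huv ?_ ?_
          · intro hX; exact hu (Or.inr ⟨hX, huD⟩)
          · intro hX; exact hv (Or.inr ⟨hX, hvD⟩)
      have hoct2 : IsOCT H.coe {w : ↥H.verts | (w : V) ∈ Sstar} := by
        refine colorable_two_of_bool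
          (fun x => if ((x : ↥H.verts) : V) ∈ D then fD ↑↑x else c ↑↑x) ?_
        intro a b hab
        exact hproper _ _ hab a.2 b.2
      have hminS := hmin _ hoct2
      have himg : Subtype.val '' {w : ↥H.verts | (w : V) ∈ Sstar} = Sstar := by
        ext x
        constructor
        · rintro ⟨u, hu, rfl⟩; exact hu
        · intro hx; exact ⟨⟨x, hSstarW hx⟩, hx, rfl⟩
      have hcard3 : {w : ↥H.verts | (w : V) ∈ Sstar}.ncard = Sstar.ncard := by
        conv_rhs => rw [← himg]
        rw [Set.ncard_image_of_injective _ Subtype.val_injective]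
      rw [hcard3] at hminS
      have h4 : Sstar.ncard ≤ (St ∩ D).ncard + (XC \ D).ncard := Set.ncard_union_le _ _
      have h5 : (XC ∩ D).ncard + (XC \ D).ncard = XC.ncard :=
        Set.ncard_inter_add_ncard_diff_eq_ncard XC D
      omega
    obtain ⟨b0, p0, hp0⟩ := hodd
    have hexX : ∃ x ∈ p0.support, x ∈ XC := by
      by_contra hnx
      push_neg at hnx
      obtain ⟨p0', hp0'⟩ := walk_transfer (Γ' := BB) p0 (by
        intro a b hab ha hb
        exact hBBmk hab.1 (hnx a ha) (hnx b hb))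
      have heven := closed_even hcBB p0'
      rw [hp0'] at heven
      exact hp0 heven
    obtain ⟨x0, hx0sup, hx0X⟩ := hexX
    have hlenrot : (p0.rotate x0 hx0sup).length = p0.length := by
      have h1 := congrArg Walk.length (p0.take_spec hx0sup)
      rw [Walk.length_append] at h1
      rw [Walk.rotate, Walk.length_append]
      omega
    set p1 : GD.Walk x0 x0 := p0.rotate x0 hx0sup with hp1def
    have hp1odd : ¬ Even p1.length := by rw [hlenrot]; exact hp0
    have hx0fact : x0 ∉ St ∧ x0 ∈ D := by
      cases hmm : p1 with
      | nil => rw [hmm] at hp1odd; simp at hp1odd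
      | cons h q => exact ⟨h.2.2.2.1, h.2.1⟩
    have hsplit : ∀ (a v' : V) (w : GD.Walk a v'), v' ∈ XC → a ∉ XC →
        ∃ y, y ∈ XC ∧ ∃ b, ∃ (q : (pgraph H D (XC ∪ St)).Walk a b) (had : GD.Adj b y)
          (r : GD.Walk y v'), w.length = q.length + 1 + r.length := by
      intro a v' w
      induction w with
      | nil => intro hv' ha; exact absurd hv' ha
      | @cons a a2 v' h w2 ih =>
        intro hv' ha
        by_cases h2 : a2 ∈ XC
        · refine ⟨a2, h2, a, Walk.nil, h, w2, ?_⟩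
          rw [Walk.length_cons, Walk.length_nil]
          omega
        · obtain ⟨y, hy, b, q, had, r, hlen⟩ := ih hv' h2
          refine ⟨y, hy, b, Walk.cons ⟨h.1, h.2.1, h.2.2.1, ?_, ?_⟩ q, had, r, ?_⟩
          · intro hm
            rcases hm with hX | hS
            · exact ha hX
            · exact h.2.2.2.1 hS
          · intro hm
            rcases hm with hX | hS
            · exact h2 hX
            · exact h.2.2.2.2 hS
          · show w2.length + 1 = q.length + 1 + 1 + r.length
            omega
    have surgery : ∀ (n : ℕ) (u v : V) (w : GD.Walk u v), w.length ≤ n → u ∈ XC → v ∈ XC →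
        u ∉ St → v ∉ St → ∃ w' : M'.Walk u v, w'.length % 2 = w.length % 2 := by
      intro n
      induction n with
      | zero =>
        intro u v w hw hu hv hus hvs
        cases w with
        | nil => exact ⟨Walk.nil, rfl⟩
        | cons h q =>
          rw [Walk.length_cons] at hw
          exact (Nat.not_succ_le_zero _ hw).elim
      | succ n ih =>
        intro u v w hw hu hv hus hvs
        cases w with
        | nil => exact ⟨Walk.nil, rfl⟩
        | @cons _ u1 _ h w1 =>
          rw [Walk.length_cons] at hw
          by_cases hu1 : u1 ∈ XC
          · have hu1s : u1 ∉ St := h.2.2.2.2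
            obtain ⟨w1', hp⟩ := ih u1 v w1 (by omega) hu1 hv hu1s hvs
            refine ⟨Walk.cons ⟨h.1, hXCKV hu, hXCKV hu1, hus, hu1s⟩ w1', ?_⟩
            show (w1'.length + 1) % 2 = (w1.length + 1) % 2
            omega
          · obtain ⟨y, hy, b, q, had, r, hlen⟩ := hsplit u1 v w1 hv hu1
            have hu1s : u1 ∉ St := h.2.2.2.2
            have hu1D : u1 ∈ D := h.2.2.1
            have huD : u ∈ D := h.2.1
            have hu1W : u1 ∈ H.verts := H.edge_vert h.1.symm
            have hqprop := support_all (Γ := pgraph H D (XC ∪ St))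
              (fun x => x ∉ XC ∧ x ∉ St ∧ x ∈ H.verts ∧
                BB.connectedComponentMk x = BB.connectedComponentMk u1 ∧ x ∈ D)
              (by
                intro a b hab hpa
                have hbX : b ∉ XC := fun hX => hab.2.2.2.2 (Or.inl hX)
                have hbS : b ∉ St := fun hS => hab.2.2.2.2 (Or.inr hS)
                refine ⟨hbX, hbS, H.edge_vert hab.1.symm, ?_, hab.2.2.1⟩
                have hBBab : BB.Adj a b := hBBmk hab.1 (fun hX => hab.2.2.2.1 (Or.inl hX)) hbX
                exact (ConnectedComponent.sound hBBab.symm.reachable).trans hpa.2.2.2.1)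
              q ⟨hu1, hu1s, hu1W, rfl, hu1D⟩
            obtain ⟨hbX, hbS, hbW, hbC, hbD⟩ := hqprop b (Walk.end_mem_support _)
            have hyD : y ∈ D := had.2.2.1
            have hyS : y ∉ St := had.2.2.2.2
            have hcq : ∀ a b, (pgraph H D (XC ∪ St)).Adj a b → c a ≠ c b := by
              intro a b hab
              exact hc a b hab.1 (fun hX => hab.2.2.2.1 (Or.inl hX))
                (fun hX => hab.2.2.2.2 (Or.inl hX))
            have hqpar : (c u1 = c b) ↔ Even q.length := parity_of_walk hcq q
            obtain ⟨r', hr'⟩ := ih y v r (by omega) hy hv hyS hvs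
            by_cases hcase : u = y ∧ xor (c u1) (c b) = false
            · obtain ⟨rfl, hpb⟩ := hcase
              have hqeven : Even q.length := hqpar.mp (bool_xor_false.mp hpb)
              refine ⟨r', ?_⟩
              rw [Walk.length_cons, hlen]
              rw [Nat.even_iff] at hqeven
              omega
            · have hRluy : Rl u y (xor (c u1) (c b)) (BB.connectedComponentMk u1) :=
                ⟨u1, b, h.1, had.1.symm, hu1, hbX, rfl, hbC, rfl⟩
              have hT : ∃ t : V × V × Bool, t ∈ Cls ∧ t.1 ∈ D ∧
                  t.2.2 = xor (c u1) (c b) ∧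
                  (∀ C', Rl t.1 t.2.1 t.2.2 C' ↔ Rl u y (xor (c u1) (c b)) C') := by
                have hdiag : u = y → xor (c u1) (c b) = true := by
                  intro he
                  cases hxx : xor (c u1) (c b)
                  · exact absurd ⟨he, hxx⟩ hcase
                  · rfl
                rcases le_total (eV u) (eV y) with he | he
                · exact ⟨(u, y, xor (c u1) (c b)), ⟨hu, hy, he, hdiag, ⟨_, hRluy⟩⟩, huD,
                    rfl, fun C' => Iff.rfl⟩
                · exact ⟨(y, u, xor (c u1) (c b)), ⟨hy, hu, he, fun h2 => hdiag h2.symm,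
                    ⟨_, hRl_symm _ _ _ _ hRluy⟩⟩, hyD, rfl,
                    fun C' => ⟨hRl_symm _ _ _ _, hRl_symm _ _ _ _⟩⟩
              obtain ⟨t, htCls, ht1D, htp, htiff⟩ := hT
              have htF : t ∈ ClsF := (hClsF t).mpr htCls
              have hCreal : BB.connectedComponentMk u1 ∈ realizers t :=
                (hrealizers t _).mpr ((htiff _).mpr hRluy)
              have final : ∃ (a2 b2 : V) (m : M'.Walk a2 b2),
                  H.Adj u a2 ∧ H.Adj y b2 ∧ a2 ∈ KV ∧ b2 ∈ KV ∧ a2 ∉ St ∧ b2 ∉ St ∧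
                  m.length % 2 = q.length % 2 := by
                by_cases hCch : BB.connectedComponentMk u1 ∈ chosen t
                · have hCA : BB.connectedComponentMk u1 ∈ chosenAll :=
                    Finset.mem_biUnion.mpr ⟨t, htF, hCch⟩
                  obtain ⟨m, hm⟩ := walk_transfer (Γ' := M') q (by
                    intro a b hab hasup hbsup
                    obtain ⟨haX, haS, haW, haC, haD⟩ := hqprop a hasup
                    obtain ⟨hbX2, hbS2, hbW2, hbC2, hbD2⟩ := hqprop b hbsup
                    exact ⟨hab.1, hKVcomp a (by rw [haC]; exact hCA),
                      hKVcomp b (by rw [hbC2]; exact hCA), haS, hbS2⟩)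
                  exact ⟨u1, b, m, h.1, had.1.symm, hKVcomp u1 hCA,
                    hKVcomp b (by rw [hbC]; exact hCA), hu1s, hbS, by rw [hm]⟩
                · have hcardch : (chosen t).card = (Rs t.1).ncard := by
                    rcases le_total ((Rs t.1).ncard) ((realizers t).card) with hle2 | hle2
                    · rw [hchcard t, min_eq_left hle2]
                    · have heq2 : chosen t = realizers t :=
                        Finset.eq_of_subset_of_card_le (hchsub t)
                          (by rw [hchcard t, min_eq_right hle2])
                      rw [heq2] at hCch
                      exact absurd hCreal hCch
                  have hRsD : Rs t.1 = XC ∩ D := by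
                    ext w2
                    constructor
                    · rintro ⟨hw2X, hw2r⟩
                      exact ⟨hw2X, (ConnectedComponent.sound hw2r).trans ht1D⟩
                    · rintro ⟨hw2X, hw2D⟩
                      exact ⟨hw2X, ConnectedComponent.exact
                        ((show K.connectedComponentMk w2 = D0 from hw2D).trans ht1D.symm)⟩
                  have hrealD : ∀ C', Rl t.1 t.2.1 t.2.2 C' → ∀ x,
                      BB.connectedComponentMk x = C' → x ∈ D := by
                    intro C' hC' x hx
                    obtain ⟨a2, b2, ha2, hb2, ha2X, hb2X, ha2C, hb2C, hxor⟩ := hC'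
                    have hxr : BB.Reachable x a2 := ConnectedComponent.exact (hx.trans ha2C.symm)
                    have h1 : K.connectedComponentMk x = K.connectedComponentMk a2 :=
                      ConnectedComponent.sound (hBBtoK hxr)
                    have h2 : K.connectedComponentMk a2 = K.connectedComponentMk t.1 :=
                      ConnectedComponent.sound (Adj.reachable (show K.Adj t.1 a2 from ha2)).symm
                    show K.connectedComponentMk x = D0
                    rw [h1, h2]
                    exact ht1D
                  have hfree : ∃ C' ∈ chosen t, ∀ x,
                      BB.connectedComponentMk x = C' → x ∉ St := by
                    by_contra hnone
                    push_neg at hnone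
                    choose wit hwit hwitS using hnone
                    have hle3 : (chosen t).card ≤ (Set.toFinite (St ∩ D)).toFinset.card := by
                      refine Finset.card_le_card_of_injOn
                        (fun C' => if hh : C' ∈ chosen t then wit C' hh else b0) ?_ ?_
                      · intro C' hC'
                        dsimp only
                        rw [Finset.mem_coe] at hC'; rw [Finset.mem_coe, dif_pos hC', Set.Finite.mem_toFinset]
                        refine ⟨hwitS C' hC', ?_⟩
                        exact hrealD C' ((hrealizers t C').mp (hchsub t hC')) _ (hwit C' hC')
                      · intro C1 h1 C2 h2 heq
                        rw [Finset.mem_coe] at h1 h2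
                        dsimp only at heq
                        rw [dif_pos h1, dif_pos h2] at heq
                        rw [← hwit C1 h1, ← hwit C2 h2, heq]
                    rw [← Set.ncard_eq_toFinset_card (St ∩ D)] at hle3
                    rw [hRsD] at hcardch
                    omega
                  obtain ⟨C', hC'ch, hC'S⟩ := hfree
                  have hC'real : Rl t.1 t.2.1 t.2.2 C' := (hrealizers t C').mp (hchsub t hC'ch)
                  have hC'A : C' ∈ chosenAll := Finset.mem_biUnion.mpr ⟨t, htF, hC'ch⟩
                  obtain ⟨a2, b2, ha2, hb2, ha2X, hb2X, ha2C, hb2C, hxor⟩ := (htiff C').mp hC'real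
                  have hreach3 : BB.Reachable a2 b2 :=
                    ConnectedComponent.exact (ha2C.trans hb2C.symm)
                  have hsupC : ∀ x ∈ hreach3.some.support,
                      BB.connectedComponentMk x = C' :=
                    support_all (Γ := BB) (fun x => BB.connectedComponentMk x = C')
                      (fun p q hpq hp => (ConnectedComponent.sound hpq.symm.reachable).trans hp)
                      hreach3.some ha2C
                  obtain ⟨m, hm⟩ := walk_transfer (Γ' := M') hreach3.some (by
                    intro a3 b3 hab hasup hbsup
                    exact ⟨hab.1, hKVcomp a3 (by rw [hsupC a3 hasup]; exact hC'A),
                      hKVcomp b3 (by rw [hsupC b3 hbsup]; exact hC'A),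
                      hC'S a3 (hsupC a3 hasup), hC'S b3 (hsupC b3 hbsup)⟩)
                  have hmpar : (c a2 = c b2) ↔ Even m.length := by
                    rw [hm]
                    exact parity_of_walk (fun a b => hcBB a b) hreach3.some
                  refine ⟨a2, b2, m, ha2, hb2, hKVcomp a2 (by rw [ha2C]; exact hC'A),
                    hKVcomp b2 (by rw [hb2C]; exact hC'A),
                    hC'S a2 ha2C, hC'S b2 hb2C, ?_⟩
                  apply mod_two_eq_of_even_iff
                  rw [← hmpar, ← hqpar, ← bool_xor_false (a := c a2) (b := c b2),
                    ← bool_xor_false (a := c u1) (b := c b), hxor]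
              obtain ⟨a2, b2, m, hua2, hyb2, ha2KV, hb2KV, ha2S, hb2S, hmq⟩ := final
              have e1 : M'.Adj u a2 := ⟨hua2, hXCKV hu, ha2KV, hus, ha2S⟩
              have e2 : M'.Adj b2 y := ⟨hyb2.symm, hb2KV, hXCKV hy, hb2S, hyS⟩
              refine ⟨Walk.cons e1
                (m.append (Walk.cons e2 r')), ?_⟩
              rw [Walk.length_cons, Walk.length_append, Walk.length_cons, Walk.length_cons,
                hlen]
              omega
    obtain ⟨wfin, hwfin⟩ := surgery p1.length x0 x0 p1 le_rfl hx0X hx0X hx0fact.1 hx0fact.1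
    obtain ⟨C2⟩ := hSoct
    let f' : V → Bool := fun a =>
      if h : ∃ u : ↥(Sᶜ : Set ↥(H.induce KV).verts), ((u : ↥(H.induce KV).verts) : V) = a
      then decide (C2 h.choose = 1) else false
    have hf' : ∀ a b, M'.Adj a b → f' a ≠ f' b := by
      intro a b hab
      have haKV : a ∈ KV := hab.2.1
      have hbKV : b ∈ KV := hab.2.2.1
      have haS : (⟨a, haKV⟩ : ↥(H.induce KV).verts) ∈ (Sᶜ : Set ↥(H.induce KV).verts) := by
        intro hmem
        exact hab.2.2.2.1 ⟨⟨a, haKV⟩, hmem, rfl⟩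
      have hbS : (⟨b, hbKV⟩ : ↥(H.induce KV).verts) ∈ (Sᶜ : Set ↥(H.induce KV).verts) := by
        intro hmem
        exact hab.2.2.2.2 ⟨⟨b, hbKV⟩, hmem, rfl⟩
      have hea : ∃ u : ↥(Sᶜ : Set ↥(H.induce KV).verts), ((u : ↥(H.induce KV).verts) : V) = a :=
        ⟨⟨⟨a, haKV⟩, haS⟩, rfl⟩
      have heb : ∃ u : ↥(Sᶜ : Set ↥(H.induce KV).verts), ((u : ↥(H.induce KV).verts) : V) = b :=
        ⟨⟨⟨b, hbKV⟩, hbS⟩, rfl⟩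
      have e1 : f' a = decide (C2 hea.choose = 1) := dif_pos hea
      have e2 : f' b = decide (C2 heb.choose = 1) := dif_pos heb
      have hchoosea : hea.choose = ⟨⟨a, haKV⟩, haS⟩ := by
        apply Subtype.ext; apply Subtype.ext; exact hea.choose_spec
      have hchooseb : heb.choose = ⟨⟨b, hbKV⟩, hbS⟩ := by
        apply Subtype.ext; apply Subtype.ext; exact heb.choose_spec
      rw [e1, e2, hchoosea, hchooseb]
      refine hfin2 _ _ (C2.valid ?_)
      show (H.induce KV).Adj a b
      exact ⟨haKV, hbKV, hab.1⟩
    have hevenfin := closed_even hf' wfin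
    rw [Nat.even_iff] at hevenfin
    have h9 : ¬ (p1.length % 2 = 0) := by rwa [Nat.even_iff] at hp1odd
    omega
  · -- order z
    intro v
    let ι : ↥(H.induce KV).verts → ↥H.verts := fun u => ⟨↑u, hKVW u.2⟩
    have hι : Function.Injective ι := by
      intro a b h
      have h2 := congrArg Subtype.val h
      exact Subtype.ext h2
    have hsub : ι '' {u | (H.induce KV).coe.Reachable u v ∧ ((u : ↥(H.induce KV).verts) : V) ∈ XC}
        ⊆ {u : ↥H.verts | H.coe.Reachable u (ι v) ∧ (u : V) ∈ XC} := by
      rintro x ⟨u, ⟨hr, hX⟩, rfl⟩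
      refine ⟨hr.map ⟨ι, ?_⟩, hX⟩
      intro a b hab
      exact hab.2.2
    calc {u | (H.induce KV).coe.Reachable u v ∧ ((u : ↥(H.induce KV).verts) : V) ∈ XC}.ncard
        = (ι '' {u | (H.induce KV).coe.Reachable u v ∧ ((u : ↥(H.induce KV).verts) : V) ∈ XC}).ncard :=
          (Set.ncard_image_of_injective _ hι).symm
      _ ≤ {u : ↥H.verts | H.coe.Reachable u (ι v) ∧ (u : V) ∈ XC}.ncard :=
          Set.ncard_le_ncard hsub (Set.toFinite _)
      _ ≤ z := hord (ι v)
  · -- counting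
    have hψadj : ∀ a b : ↥((H.induce KV).deleteVerts XC).verts,
        ((H.induce KV).deleteVerts XC).coe.Adj a b → BB.Adj ↑a ↑b := by
      intro a b hab
      have h2 : ((H.induce KV).deleteVerts XC).Adj ↑a ↑b := hab
      rw [Subgraph.deleteVerts_adj] at h2
      exact hBBmk h2.2.2.2.2.2.2 h2.2.1 h2.2.2.2.1
    let ψ : ((H.induce KV).deleteVerts XC).coe →g BB :=
      ⟨fun a => ↑a, fun {a b} h => hψadj a b h⟩
    have hvertmem : ∀ a : ↥((H.induce KV).deleteVerts XC).verts,
        BB.connectedComponentMk ↑a ∈ chosenAll := by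
      intro a
      obtain ⟨hKVm, hnX⟩ : (a : V) ∈ (H.induce KV).verts \ XC := a.2
      rcases hKVm with hX | hm
      · exact absurd hX hnX
      · exact hm.2.2
    have hmem : ∀ cc : ((H.induce KV).deleteVerts XC).coe.ConnectedComponent,
        cc.map ψ ∈ chosenAll := by
      refine ConnectedComponent.ind ?_
      intro v
      rw [ConnectedComponent.map_mk]
      exact hvertmem v
    have hinj : Function.Injective
        (fun cc : ((H.induce KV).deleteVerts XC).coe.ConnectedComponent => cc.map ψ) := by
      intro c1 c2
      refine ConnectedComponent.ind₂ (β := fun c1 c2 => c1.map ψ = c2.map ψ → c1 = c2) ?_ c1 c2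
      intro a b h
      rw [ConnectedComponent.map_mk, ConnectedComponent.map_mk] at h
      have hr : BB.Reachable ↑a ↑b := ConnectedComponent.exact h
      have hsup : ∀ x ∈ hr.some.support, x ∈ ((H.induce KV).deleteVerts XC).verts := by
        have hcomps := support_all (Γ := BB)
          (fun x => BB.connectedComponentMk x = BB.connectedComponentMk (a : V))
          (fun p q hpq hp => ((ConnectedComponent.sound hpq.symm.reachable)).trans hp)
          hr.some rfl
        intro x hx
        have hcx := hcomps x hx
        have hCA : BB.connectedComponentMk x ∈ chosenAll := by rw [hcx]; exact hvertmem a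
        obtain ⟨hxW, hxXC⟩ := hcomp_mem _ hCA x rfl
        rw [Subgraph.deleteVerts_verts]
        exact ⟨hKVcomp x hCA, hxXC⟩
      have hreach2 := reachable_in (Γ := BB) (Γ' := ((H.induce KV).deleteVerts XC).coe)
        (by
          intro p q hp hq hpq
          have hp2 := hp; have hq2 := hq
          rw [Subgraph.deleteVerts_verts] at hp2 hq2
          show ((H.induce KV).deleteVerts XC).Adj p q
          rw [Subgraph.deleteVerts_adj]
          exact ⟨hp2.1, hp2.2, hq2.1, hq2.2, hp2.1, hq2.1, hpq.1⟩)
        hr.some hsup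
      exact ConnectedComponent.sound hreach2
    have hcard1 : Nat.card ((H.induce KV).deleteVerts XC).coe.ConnectedComponent ≤
        chosenAll.card := by
      have h2 := Nat.card_le_card_of_injective
        (fun cc : ((H.induce KV).deleteVerts XC).coe.ConnectedComponent =>
          (⟨cc.map ψ, hmem cc⟩ : {x // x ∈ chosenAll}))
        (fun c1 c2 h => hinj (Subtype.mk_eq_mk.mp h))
      simpa [Nat.card_eq_fintype_card, Fintype.card_coe] using h2
    have hcard2 : chosenAll.card ≤ ClsF.card * z := by
      calc chosenAll.card ≤ ∑ t ∈ ClsF, (chosen t).card := Finset.card_biUnion_le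
        _ ≤ ClsF.card • z := Finset.sum_le_card_nsmul _ _ _ (by
            intro t ht
            rw [hchcard t]
            exact le_trans (min_le_left _ _) (hRz t.1 (((hClsF t).mp ht).1)))
        _ = ClsF.card * z := by rw [smul_eq_mul]
    let XCF : Finset V := (Set.toFinite XC).toFinset
    have hXCF : ∀ x, x ∈ XCF ↔ x ∈ XC := fun x => Set.Finite.mem_toFinset _
    have hXCFcard : XCF.card = XC.ncard := (Set.ncard_eq_toFinset_card XC _).symm
    let pairs : Finset (V × V) := (XCF ×ˢ XCF).filter (fun q => K.Reachable q.1 q.2)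
    have hcls : ClsF.card ≤ pairs.card := by
      refine Finset.card_le_card_of_injOn
        (fun t => if t.2.2 = true then (t.1, t.2.1) else (t.2.1, t.1)) ?_ ?_
      · intro t ht
        rw [Finset.mem_coe, hClsF] at ht
        obtain ⟨h1, h2, h3, h4, C, hC⟩ := ht
        have hre := hRl_reach _ _ _ _ hC
        dsimp only
        by_cases hb : t.2.2 = true
        · rw [if_pos hb]
          exact Finset.mem_filter.mpr ⟨Finset.mem_product.mpr
            ⟨(hXCF _).mpr h1, (hXCF _).mpr h2⟩, hre⟩
        · rw [if_neg hb]
          exact Finset.mem_filter.mpr ⟨Finset.mem_product.mpr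
            ⟨(hXCF _).mpr h2, (hXCF _).mpr h1⟩, hre.symm⟩
      · rintro ⟨x, y, p⟩ ht ⟨x', y', p'⟩ ht' heq
        rw [Finset.mem_coe, hClsF] at ht ht'
        obtain ⟨h1, h2, h3, h4, -⟩ := ht
        obtain ⟨h1', h2', h3', h4', -⟩ := ht'
        dsimp only at heq h3 h3' h4 h4' ⊢
        by_cases hb : p = true <;> by_cases hb' : p' = true
        · rw [if_pos hb, if_pos hb'] at heq
          obtain ⟨e1, e2⟩ := Prod.ext_iff.mp heq
          dsimp only at e1 e2
          simp only [Prod.ext_iff]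
          exact ⟨e1, e2, by rw [hb, hb']⟩
        · rw [if_pos hb, if_neg hb'] at heq
          obtain ⟨e1, e2⟩ := Prod.ext_iff.mp heq
          dsimp only at e1 e2
          have hylex : eV y' ≤ eV x' := by rw [← e1, ← e2]; exact h3
          exact absurd (h4' (eV.injective (le_antisymm h3' hylex))) hb'
        · rw [if_neg hb, if_pos hb'] at heq
          obtain ⟨e1, e2⟩ := Prod.ext_iff.mp heq
          dsimp only at e1 e2
          have hylex : eV y ≤ eV x := by rw [e1, e2]; exact h3'
          exact absurd (h4 (eV.injective (le_antisymm h3 hylex))) hb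
        · rw [if_neg hb, if_neg hb'] at heq
          obtain ⟨e1, e2⟩ := Prod.ext_iff.mp heq
          dsimp only at e1 e2
          have hp : p = false := by revert hb; cases p <;> simp
          have hp' : p' = false := by revert hb'; cases p' <;> simp
          simp only [Prod.ext_iff]
          exact ⟨e2, e1, by rw [hp, hp']⟩
    have hpairs : pairs.card ≤ XCF.card * z := by
      have hfib := Finset.card_eq_sum_card_fiberwise (s := pairs) (t := XCF)
        (f := fun q : V × V => q.1) (by
          intro q hq
          rw [Finset.mem_coe, Finset.mem_filter, Finset.mem_product] at hq
          exact hq.1.1)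
      rw [hfib]
      refine le_trans (Finset.sum_le_card_nsmul _ _ z ?_) (le_of_eq (by rw [smul_eq_mul]))
      intro x hx
      have hbound : (pairs.filter (fun q => q.1 = x)).card ≤ (Rs x).ncard := by
        rw [Set.ncard_eq_toFinset_card (Rs x)]
        refine Finset.card_le_card_of_injOn (fun q => q.2) ?_ ?_
        · intro q hq
          rw [Finset.mem_coe, Finset.mem_filter] at hq
          obtain ⟨hq1, hq2⟩ := hq
          rw [Finset.mem_filter, Finset.mem_product] at hq1
          rw [Finset.mem_coe, Set.Finite.mem_toFinset]
          exact ⟨(hXCF _).mp hq1.1.2, by rw [← hq2]; exact hq1.2.symm⟩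
        · rintro ⟨a1, a2⟩ hh1 ⟨b1, b2⟩ hh2 heq
          rw [Finset.mem_coe, Finset.mem_filter] at hh1 hh2
          dsimp only at heq
          exact Prod.ext (hh1.2.trans hh2.2.symm) heq
      exact le_trans hbound (hRz x ((hXCF x).mp hx))
    calc Nat.card ((H.induce KV).deleteVerts XC).coe.ConnectedComponent
        ≤ chosenAll.card := hcard1
      _ ≤ ClsF.card * z := hcard2
      _ ≤ pairs.card * z := Nat.mul_le_mul_right _ hcls
      _ ≤ (XCF.card * z) * z := Nat.mul_le_mul_right _ hpairs
      _ = z ^ 2 * XC.ncard := by rw [hXCFcard]; ring
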